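/- Let G = (V, E) be a finite directed acyclic graph whose vertex set V is contained in the ground set of a matroid M. Suppose that every non-sink vertex u of G is spanned in M by its out-neighborhood δ⁺(u). Then for every set S ⊆ V that is independent in M there exists an injective function ψ : S → {sinks of G} such that, for every u ∈ S, ψ(u) is a sink of G reachable from u by a directed path (every vertex is reachable from itself). -/
import Mathlib


open Finset

attribute [local instance] Classical.propDecidable

universe u

/-- A matroid on a ground set `α`, given as a nonempty, downward closed family of
finite independent sets satisfying the augmentation property. -/
structure MatroidOn (α : Type u) where
  Indep : Finset α → Prop
  nonempty : ∃ A, Indep A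
  subset_indep : ∀ ⦃A B : Finset α⦄, A ⊆ B → Indep B → Indep A
  augment : ∀ ⦃A B : Finset α⦄, Indep A → Indep B → A.card < B.card →
    ∃ e ∈ B, e ∉ A ∧ Indep (insert e A)

/-- Submodularity of a set function. -/
def SubmodularFn {α : Type u} [DecidableEq α] (f : Finset α → ℝ) : Prop :=
  ∀ X Y : Finset α, X ⊆ Y → ∀ e, e ∉ Y →
    f (insert e Y) - f Y ≤ f (insert e X) - f X

/-- Monotonicity of a set function. -/
def MonotoneFn {α : Type u} (f : Finset α → ℝ) : Prop :=
  ∀ X Y : Finset α, X ⊆ Y → f X ≤ f Y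

variable {α : Type u} [DecidableEq α]

/-- The marginal gain `f(e | T) = f (T ∪ {e}) - f T`. -/
def marg (f : Finset α → ℝ) (T : Finset α) (e : α) : ℝ := f (insert e T) - f T

/-- The rank of a finite set `D` in the matroid `M`: the largest cardinality of an
independent subset of `D`. -/
noncomputable def MatroidOn.rk (M : MatroidOn α) (D : Finset α) : ℕ :=
  sSup {m | ∃ I : Finset α, I ⊆ D ∧ M.Indep I ∧ I.card = m}

/-- `x` is spanned by `D` in `M`: the rank of `D ∪ {x}` equals the rank of `D`. -/
def MatroidOn.Spanned (M : MatroidOn α) (x : α) (D : Finset α) : Prop :=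
  M.rk (insert x D) = M.rk D



section Aux

set_option linter.unusedSectionVars false

variable (M : MatroidOn α)

lemma MatroidOn.indep_empty : M.Indep ∅ := by
  obtain ⟨A, hA⟩ := M.nonempty
  exact M.subset_indep (Finset.empty_subset A) hA

lemma rk_set_nonempty (D : Finset α) :
    {m | ∃ I : Finset α, I ⊆ D ∧ M.Indep I ∧ I.card = m}.Nonempty :=
  ⟨0, ∅, Finset.empty_subset D, M.indep_empty, Finset.card_empty⟩

lemma rk_set_bdd (D : Finset α) :
    BddAbove {m | ∃ I : Finset α, I ⊆ D ∧ M.Indep I ∧ I.card = m} :=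
  ⟨D.card, fun _ ⟨_, hI, _, hc⟩ => hc ▸ Finset.card_le_card hI⟩

lemma card_le_rk {I D : Finset α} (hID : I ⊆ D) (hI : M.Indep I) :
    I.card ≤ M.rk D :=
  le_csSup (rk_set_bdd M D) ⟨I, hID, hI, rfl⟩

lemma exists_basis (D : Finset α) :
    ∃ I : Finset α, I ⊆ D ∧ M.Indep I ∧ I.card = M.rk D :=
  Nat.sSup_mem (rk_set_nonempty M D) (rk_set_bdd M D)

lemma rk_mono {X Y : Finset α} (h : X ⊆ Y) : M.rk X ≤ M.rk Y := by
  obtain ⟨I, hIX, hI, hIc⟩ := exists_basis M X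
  exact hIc ▸ card_le_rk M (hIX.trans h) hI

lemma exists_basis_superset :
    ∀ (k : ℕ) (J D : Finset α), J ⊆ D → M.Indep J → M.rk D - J.card ≤ k →
      ∃ I, J ⊆ I ∧ I ⊆ D ∧ M.Indep I ∧ I.card = M.rk D := by
  obtain rfl : ‹DecidableEq α› = (fun a b => Classical.propDecidable (a = b)) :=
    Subsingleton.elim _ _
  intro k
  induction k with
  | zero =>
    intro J D hJD hJ hk
    have h1 := card_le_rk M hJD hJ
    exact ⟨J, subset_rfl, hJD, hJ, by omega⟩
  | succ k ih =>
    intro J D hJD hJ hk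
    have h1 := card_le_rk M hJD hJ
    by_cases h : J.card = M.rk D
    · exact ⟨J, subset_rfl, hJD, hJ, h⟩
    · have hlt : J.card < M.rk D := lt_of_le_of_ne h1 h
      obtain ⟨B, hBD, hB, hBc⟩ := exists_basis M D
      obtain ⟨e, heB, heJ, hind⟩ := M.augment hJ hB (by omega)
      have hsub : insert e J ⊆ D := Finset.insert_subset (hBD heB) hJD
      obtain ⟨I, hI1, hI2, hI3, hI4⟩ := ih (insert e J) D hsub hind
        (by rw [Finset.card_insert_of_notMem heJ]; omega)
      exact ⟨I, (Finset.subset_insert e J).trans hI1, hI2, hI3, hI4⟩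

lemma spanned_mono {x : α} {D X : Finset α} (hDX : D ⊆ X)
    (h : M.rk (insert x D) = M.rk D) : M.rk (insert x X) = M.rk X := by
  obtain rfl : ‹DecidableEq α› = (fun a b => Classical.propDecidable (a = b)) :=
    Subsingleton.elim _ _
  refine le_antisymm ?_ (rk_mono M (Finset.subset_insert x X))
  obtain ⟨J, hJD, hJ, hJc⟩ := exists_basis M D
  obtain ⟨I, hJI, hIX, hI, hIc⟩ :=
    exists_basis_superset M (M.rk X - J.card) J X (hJD.trans hDX) hJ le_rfl
  obtain ⟨K, hKX, hK, hKc⟩ := exists_basis M (insert x X)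
  by_contra hcon
  have hlt : I.card < K.card := by omega
  obtain ⟨e, heK, heI, hind⟩ := M.augment hI hK hlt
  have heX : e ∈ insert x X := hKX heK
  rcases Finset.mem_insert.mp heX with he | he
  · have hxJ : e ∉ J := fun hx => heI (hJI hx)
    have hind' : M.Indep (insert e J) :=
      M.subset_indep (Finset.insert_subset_insert e hJI) hind
    have hle : (insert e J).card ≤ M.rk (insert x D) := by
      refine card_le_rk M ?_ hind'
      rw [he]
      exact Finset.insert_subset_insert x hJD
    rw [Finset.card_insert_of_notMem hxJ, h] at hle
    omega
  · have hle : (insert e I).card ≤ M.rk X :=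
      card_le_rk M (Finset.insert_subset he hIX) hind
    rw [Finset.card_insert_of_notMem heI] at hle
    omega

end Aux

theorem dag_matroid_injective_map_to_sinks
    (M : MatroidOn α) (V : Finset α) (E : α → α → Prop)
    (hE : ∀ a b, E a b → a ∈ V ∧ b ∈ V)
    (hacyclic : ∀ v, ¬ Relation.TransGen E v v)
    (hspan : ∀ u ∈ V, (∃ v, E u v) → M.Spanned u (V.filter fun v => E u v))
    (S : Finset α) (hSV : S ⊆ V) (hS : M.Indep S) :
    ∃ ψ : α → α, Set.InjOn ψ ↑S ∧
      ∀ u ∈ S, ψ u ∈ V ∧ (∀ v, ¬ E (ψ u) v) ∧ Relation.ReflTransGen E u (ψ u) := by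
  obtain rfl : ‹DecidableEq α› = (fun a b => Classical.propDecidable (a = b)) :=
    Subsingleton.elim _ _
  set R : α → Finset α := fun s => V.filter fun w => Relation.ReflTransGen E s w with hR
  suffices H : ∀ n (S : Finset α), S ⊆ V → M.Indep S → (∑ s ∈ S, (R s).card) ≤ n →
      ∃ ψ : α → α, Set.InjOn ψ ↑S ∧
        ∀ u ∈ S, ψ u ∈ V ∧ (∀ v, ¬ E (ψ u) v) ∧ Relation.ReflTransGen E u (ψ u) by
    exact H _ S hSV hS le_rfl
  intro n
  induction n using Nat.strong_induction_on with
  | _ n ih =>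
  intro S hSV hS hn
  by_cases hsink : ∃ u ∈ S, ∃ v, E u v
  · obtain ⟨u, huS, hns⟩ := hsink
    have huV : u ∈ V := hSV huS
    have hspanned := hspan u huV hns
    set D : Finset α := V.filter (fun v => E u v) with hD
    set J : Finset α := S.erase u with hJdef
    set X : Finset α := J ∪ D with hX
    have hDX : D ⊆ X := Finset.subset_union_right
    have hrkX : M.rk (insert u X) = M.rk X := spanned_mono M hDX hspanned
    have hJ : M.Indep J := M.subset_indep (Finset.erase_subset u S) hS
    have hSsub : S ⊆ insert u X := by
      intro s hs
      rcases eq_or_ne s u with h | h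
      · exact h ▸ Finset.mem_insert_self u X
      · exact Finset.mem_insert_of_mem (Finset.mem_union_left D
          (Finset.mem_erase.mpr ⟨h, hs⟩))
    have hcardS : S.card ≤ M.rk X := hrkX ▸ card_le_rk M hSsub hS
    have hJX : J ⊆ X := Finset.subset_union_left
    obtain ⟨I, hJI, hIX, hI, hIc⟩ :=
      exists_basis_superset M (M.rk X - J.card) J X hJX hJ le_rfl
    have hJcard : J.card < I.card := by
      have : J.card < S.card := Finset.card_erase_lt_of_mem huS
      omega
    obtain ⟨e, heI, heJ, hind⟩ := M.augment hJ hI hJcard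
    have heD : e ∈ D := by
      rcases Finset.mem_union.mp (hIX heI) with h | h
      · exact absurd h heJ
      · exact h
    have heV : e ∈ V := (Finset.mem_filter.mp heD).1
    have hue : E u e := (Finset.mem_filter.mp heD).2
    have hS'V : insert e J ⊆ V :=
      Finset.insert_subset heV ((Finset.erase_subset u S).trans hSV)
    have huR : u ∈ R u := Finset.mem_filter.mpr ⟨huV, Relation.ReflTransGen.refl⟩
    have hRsub : R e ⊂ R u := by
      constructor
      · intro w hw
        obtain ⟨hwV, hwr⟩ := Finset.mem_filter.mp hw
        exact Finset.mem_filter.mpr ⟨hwV, Relation.ReflTransGen.head hue hwr⟩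
      · intro hsub
        have := Finset.mem_filter.mp (hsub huR)
        exact hacyclic u (Relation.TransGen.head' hue this.2)
    have hRcard : (R e).card < (R u).card := Finset.card_lt_card hRsub
    have hμlt : (∑ s ∈ insert e J, (R s).card) < ∑ s ∈ S, (R s).card := by
      have hSe : S = insert u J := (Finset.insert_erase huS).symm
      have h1 : (∑ s ∈ S, (R s).card) = (R u).card + ∑ s ∈ J, (R s).card := by
        rw [hSe, Finset.sum_insert (Finset.notMem_erase u S)]
      have h2 : (∑ s ∈ insert e J, (R s).card) = (R e).card + ∑ s ∈ J, (R s).card :=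
        Finset.sum_insert heJ
      omega
    obtain ⟨ψ', hψ'inj, hψ'⟩ := ih (∑ s ∈ insert e J, (R s).card) (by omega)
      (insert e J) hS'V hind le_rfl
    have heS' : e ∈ insert e J := Finset.mem_insert_self e J
    have hJS' : J ⊆ insert e J := Finset.subset_insert e J
    refine ⟨fun w => if w = u then ψ' e else ψ' w, ?_, ?_⟩
    · intro a ha b hb hab
      simp only [Finset.mem_coe] at ha hb
      by_cases hau : a = u <;> by_cases hbu : b = u
      · rw [hau, hbu]
      · simp only [if_pos hau, if_neg hbu] at hab
        have hbJ : b ∈ J := Finset.mem_erase.mpr ⟨hbu, hb⟩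
        have : e = b := hψ'inj (Finset.mem_coe.mpr heS') (Finset.mem_coe.mpr (hJS' hbJ)) hab
        exact absurd (this ▸ hbJ) heJ
      · simp only [if_neg hau, if_pos hbu] at hab
        have haJ : a ∈ J := Finset.mem_erase.mpr ⟨hau, ha⟩
        have : e = a := hψ'inj (Finset.mem_coe.mpr heS') (Finset.mem_coe.mpr (hJS' haJ)) hab.symm
        exact absurd (this ▸ haJ) heJ
      · simp only [if_neg hau, if_neg hbu] at hab
        have haJ : a ∈ J := Finset.mem_erase.mpr ⟨hau, ha⟩
        have hbJ : b ∈ J := Finset.mem_erase.mpr ⟨hbu, hb⟩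
        exact hψ'inj (Finset.mem_coe.mpr (hJS' haJ)) (Finset.mem_coe.mpr (hJS' hbJ)) hab
    · intro w hw
      by_cases hwu : w = u
      · simp only [if_pos hwu]
        obtain ⟨h1, h2, h3⟩ := hψ' e heS'
        exact ⟨h1, h2, hwu ▸ Relation.ReflTransGen.head hue h3⟩
      · simp only [if_neg hwu]
        exact hψ' w (hJS' (Finset.mem_erase.mpr ⟨hwu, hw⟩))
  · push_neg at hsink
    exact ⟨id, Set.injOn_id _, fun u hu => ⟨hSV hu, hsink u hu, Relation.ReflTransGen.refl⟩⟩
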